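/- Let X be an Archimedean and directed partially ordered vector space and V ⊆ X a circled net catching set for 0. Then V absorbs all order intervals: for all x ≤ y in X there exists λ₀ > 0 such that λ[x,y] ⊆ V for all λ ∈ [-λ₀, λ₀]. -/

import Mathlib

/-- A net decreases to `x`: antitone with infimum `x`. -/
def DecrTo {ι X : Type*} [Preorder ι] [Preorder X] (f : ι → X) (x : X) : Prop :=
  Antitone f ∧ IsGLB (Set.range f) x

/-- `V` is a net catching set for `0`: for every net `f ↓ 0` there is `α`
with `[-f α, f α] ⊆ V`. -/
def NetCatchingSetForZero {X : Type*} [AddCommGroup X] [PartialOrder X] [IsOrderedAddMonoid X] (V : Set X) : Prop :=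
  ∀ (ι : Type) [Preorder ι], Nonempty ι → Directed (· ≤ ·) (id : ι → ι) →
    ∀ f : ι → X, DecrTo f (0 : X) → ∃ α : ι, Set.Icc (-(f α)) (f α) ⊆ V

/-- `M` is circled. -/
def Circled {X : Type*} [AddCommGroup X] [Module ℝ X] (M : Set X) : Prop :=
  ∀ c : ℝ, c ∈ Set.Icc (-1 : ℝ) 1 → ∀ m ∈ M, c • m ∈ M

/-- In an Archimedean directed partially ordered vector space, every circled
net catching set for `0` absorbs all order intervals. -/
theorem stmt19 {X : Type*} [AddCommGroup X] [PartialOrder X] [IsOrderedAddMonoid X] [Module ℝ X]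
    [PosSMulStrictMono ℝ X] [PosSMulReflectLT ℝ X]
    (hdir : ∀ x y : X, ∃ z : X, x ≤ z ∧ y ≤ z)
    (harch : ∀ x y : X, (∀ n : ℕ, n • x ≤ y) → x ≤ 0)
    (V : Set X) (hcirc : Circled V) (hnc : NetCatchingSetForZero V) :
    ∀ x y : X, x ≤ y → ∃ lam₀ : ℝ, 0 < lam₀ ∧
      ∀ c : ℝ, |c| ≤ lam₀ → ∀ z ∈ Set.Icc x y, c • z ∈ V := by
  intro x y hxy
  obtain ⟨u, hyu, hxu⟩ := hdir y (-x)
  have hux : -u ≤ x := by have := neg_le_neg hxu; simpa using this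
  have hu0 : (0 : X) ≤ u := by
    have h : -u ≤ u := hux.trans (hxy.trans hyu)
    have h2 : (0 : X) ≤ u + u := by simpa using add_le_add h (le_refl u)
    have h3 : (2:ℝ)⁻¹ • (u + u) = u := by
      rw [← two_smul ℝ u, smul_smul]; norm_num
    have := smul_le_smul_of_nonneg_left h2 (by norm_num : (0:ℝ) ≤ (2:ℝ)⁻¹)
    rwa [smul_zero, h3] at this
  -- the net f n = (1/(n+1)) • u
  set f : ℕ → X := fun n => ((n + 1 : ℝ))⁻¹ • u with hf
  have hfpos : ∀ n : ℕ, (0 : X) ≤ f n := by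
    intro n
    exact smul_nonneg (by positivity) hu0
  have hanti : Antitone f := by
    intro m n hmn
    have h1 : ((n + 1 : ℝ))⁻¹ ≤ ((m + 1 : ℝ))⁻¹ := by
      gcongr
    calc f n = ((n + 1 : ℝ))⁻¹ • u := rfl
      _ ≤ ((m + 1 : ℝ))⁻¹ • u := smul_le_smul_of_nonneg_right h1 hu0
  have hglb : IsGLB (Set.range f) (0 : X) := by
    constructor
    · rintro _ ⟨n, rfl⟩; exact hfpos n
    · intro b hb
      apply harch
      intro n
      cases n with
      | zero => simpa using hu0
      | succ k =>
        have hbk : b ≤ f (k) := hb ⟨k, rfl⟩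
        have : ((k + 1 : ℕ) : ℝ) • b ≤ ((k + 1 : ℕ) : ℝ) • f k :=
          smul_le_smul_of_nonneg_left hbk (by positivity)
        have heq : ((k + 1 : ℕ) : ℝ) • f k = u := by
          simp only [hf, smul_smul]
          push_cast
          rw [mul_inv_cancel₀ (by positivity), one_smul]
        rw [heq] at this
        calc (k + 1) • b = ((k + 1 : ℕ) : ℝ) • b := by
              rw [← Nat.cast_smul_eq_nsmul ℝ]
          _ ≤ u := this
  obtain ⟨α, hα⟩ := hnc ℕ ⟨0⟩ (fun a b => ⟨max a b, le_max_left _ _, le_max_right _ _⟩)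
    f ⟨hanti, hglb⟩
  refine ⟨((α + 1 : ℝ))⁻¹, by positivity, ?_⟩
  intro c hc z hz
  have hzu : z ≤ u := hz.2.trans hyu
  have hnuz : -u ≤ z := hux.trans hz.1
  set lam₀ : ℝ := ((α + 1 : ℝ))⁻¹
  have hlam₀ : 0 < lam₀ := by positivity
  have hmem : lam₀ • z ∈ Set.Icc (-(f α)) (f α) := by
    constructor
    · have := smul_le_smul_of_nonneg_left hnuz hlam₀.le
      simpa [hf, smul_neg] using this
    · exact smul_le_smul_of_nonneg_left hzu hlam₀.le
  have hVmem : lam₀ • z ∈ V := hα hmem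
  have key : c • z = (c / lam₀) • (lam₀ • z) := by
    rw [smul_smul, div_mul_cancel₀ _ hlam₀.ne']
  rw [key]
  apply hcirc
  · rw [Set.mem_Icc, ← abs_le]
    rw [abs_div, abs_of_pos hlam₀, div_le_one hlam₀]
    exact hc
  · exact hVmem
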